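/- If T₁, T₂ are CP maps X → B(H) with T = T₁ + T₂, and there is a projection P ∈ π_T(X)′ implementing T₁ and T₂ (i.e. T₁ = V_T* P π_T(·) V_T, T₂ = V_T*(1−P)π_T(·)V_T), then the minimal Stinespring representation of T is unitarily equivalent to the direct sum of minimal Stinespring representations of T₁ and T₂. -/

import Mathlib

open scoped ComplexOrder InnerProductSpace

noncomputable section

/-- A matrix over a star ring is positive if it is of the form `Nᴴ * N`. -/
def MatPos {A : Type*} [Ring A] [StarRing A] {n : ℕ}
    (M : Matrix (Fin n) (Fin n) A) : Prop :=
  ∃ N : Matrix (Fin n) (Fin n) A, M = N.conjTranspose * N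

/-- `T` is completely positive if the induced entrywise maps on matrices are positive. -/
def CompletelyPositiveFun {A B : Type*} [Ring A] [StarRing A] [Ring B] [StarRing B]
    (T : A → B) : Prop :=
  ∀ (n : ℕ) (M : Matrix (Fin n) (Fin n) A), MatPos M → MatPos (M.map T)

/-- `(π, K, V)` is a Stinespring representation of `T : X → B(H)`:
`T x = V* (π x) V` for all `x`. -/
def IsStinespring {X : Type*} [NormedRing X] [StarRing X] [CStarRing X]
    [NormedAlgebra ℂ X] [StarModule ℂ X]
    {H K : Type*} [NormedAddCommGroup H] [InnerProductSpace ℂ H] [CompleteSpace H]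
    [NormedAddCommGroup K] [InnerProductSpace ℂ K] [CompleteSpace K]
    (T : X → (H →L[ℂ] H)) (π : X →⋆ₐ[ℂ] (K →L[ℂ] K)) (V : H →L[ℂ] K) : Prop :=
  ∀ x : X, T x = (ContinuousLinearMap.adjoint V).comp ((π x).comp V)

/-- Minimality: the closed linear span of `π(X) V H` is all of `K`. -/
def IsMinimalStinespring {X : Type*} [NormedRing X] [StarRing X] [CStarRing X]
    [NormedAlgebra ℂ X] [StarModule ℂ X]
    {H K : Type*} [NormedAddCommGroup H] [InnerProductSpace ℂ H] [CompleteSpace H]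
    [NormedAddCommGroup K] [InnerProductSpace ℂ K] [CompleteSpace K]
    (π : X →⋆ₐ[ℂ] (K →L[ℂ] K)) (V : H →L[ℂ] K) : Prop :=
  (Submodule.span ℂ {k : K | ∃ (x : X) (h : H), k = π x (V h)}).topologicalClosure = ⊤

set_option linter.unusedSectionVars false

section Aux

variable {X : Type*} [NormedRing X] [StarRing X] [CStarRing X]
    [NormedAlgebra ℂ X] [StarModule ℂ X]
    {H K : Type*} [NormedAddCommGroup H] [InnerProductSpace ℂ H] [CompleteSpace H]
    [NormedAddCommGroup K] [InnerProductSpace ℂ K] [CompleteSpace K]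

/-- The natural linear map `X ⊗ H → K` sending `x ⊗ h` to `π x (V h)`. -/
noncomputable def stineL (π : X →⋆ₐ[ℂ] (K →L[ℂ] K)) (V : H →L[ℂ] K) :
    TensorProduct ℂ X H →ₗ[ℂ] K :=
  TensorProduct.lift (LinearMap.mk₂ ℂ (fun x h => π x (V h))
    (fun x y h => by simp [map_add])
    (fun c x h => by simp)
    (fun x h g => by simp)
    (fun c x h => by simp))

@[simp] lemma stineL_tmul (π : X →⋆ₐ[ℂ] (K →L[ℂ] K)) (V : H →L[ℂ] K) (x : X) (h : H) :
    stineL π V (x ⊗ₜ[ℂ] h) = π x (V h) := rfl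

lemma stineL_mul (π : X →⋆ₐ[ℂ] (K →L[ℂ] K)) (V : H →L[ℂ] K) (x : X)
    (t : TensorProduct ℂ X H) :
    stineL π V (LinearMap.rTensor H (LinearMap.mulLeft ℂ x) t) = π x (stineL π V t) := by
  induction t using TensorProduct.induction_on with
  | zero => simp
  | tmul y h => simp [LinearMap.rTensor_tmul, map_mul, ContinuousLinearMap.mul_apply]
  | add a b ha hb => simp [map_add, ha, hb]

lemma range_stineL (π : X →⋆ₐ[ℂ] (K →L[ℂ] K)) (V : H →L[ℂ] K) :
    LinearMap.range (stineL π V) =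
      Submodule.span ℂ {k : K | ∃ (x : X) (h : H), k = π x (V h)} := by
  rw [LinearMap.range_eq_map, ← TensorProduct.span_tmul_eq_top ℂ X H, Submodule.map_span]
  congr 1
  ext k
  constructor
  · rintro ⟨t, ⟨x, h, rfl⟩, rfl⟩
    exact ⟨x, h, by simp⟩
  · rintro ⟨x, h, rfl⟩
    exact ⟨x ⊗ₜ h, ⟨x, h, rfl⟩, by simp⟩

end Aux

open ContinuousLinearMap in
lemma stinespring_corner {X : Type*} [NormedRing X] [StarRing X] [CStarRing X]
    [NormedAlgebra ℂ X] [StarModule ℂ X]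
    {H K K' : Type*} [NormedAddCommGroup H] [InnerProductSpace ℂ H] [CompleteSpace H]
    [NormedAddCommGroup K] [InnerProductSpace ℂ K] [CompleteSpace K]
    [NormedAddCommGroup K'] [InnerProductSpace ℂ K'] [CompleteSpace K']
    (T : X → (H →L[ℂ] H))
    (π : X →⋆ₐ[ℂ] (K →L[ℂ] K)) (V : H →L[ℂ] K)
    (hmin : IsMinimalStinespring π V)
    (Q : K →L[ℂ] K) (hq : IsIdempotentElem Q) (hqsa : IsSelfAdjoint Q)
    (hcomm : ∀ x : X, Q * π x = π x * Q)
    (hT : ∀ x : X, T x = (adjoint V).comp (Q.comp ((π x).comp V)))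
    (π' : X →⋆ₐ[ℂ] (K' →L[ℂ] K')) (V' : H →L[ℂ] K')
    (hst' : IsStinespring T π' V') (hmin' : IsMinimalStinespring π' V') :
    ∃ W : K' →L[ℂ] K, Isometry W ∧ (∀ h : H, W (V' h) = Q (V h)) ∧
      (∀ (x : X) (k : K'), π x (W k) = W (π' x k)) ∧
      (∀ k : K', Q (W k) = W k) ∧
      (∀ k : K, Q k ∈ Set.range W) := by
  set L : TensorProduct ℂ X H →ₗ[ℂ] K := stineL π V with hL
  set L' : TensorProduct ℂ X H →ₗ[ℂ] K' := stineL π' V' with hL'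
  have hQQ : ∀ w : K, Q (Q w) = Q w := fun w => by
    conv_rhs => rw [← hq]
    rfl
  have hπadj : ∀ x : X, adjoint (π x) = π (star x) := fun x => by
    rw [← ContinuousLinearMap.star_eq_adjoint, ← map_star]
  have hQmove : ∀ u v : K, ⟪Q u, v⟫_ℂ = ⟪u, Q v⟫_ℂ := fun u v => by
    conv_lhs => rw [← hqsa.adjoint_eq]
    rw [ContinuousLinearMap.adjoint_inner_left]
  have hQcomm : ∀ (x : X) (w : K), π x (Q w) = Q (π x w) := fun x w => by
    have := DFunLike.congr_fun (hcomm x).symm w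
    simpa [ContinuousLinearMap.mul_apply] using this
  -- key inner product identity
  have keyA : ∀ (x y : X) (h g : H),
      ⟪Q (L (x ⊗ₜ[ℂ] h)), Q (L (y ⊗ₜ[ℂ] g))⟫_ℂ = ⟪h, T (star x * y) g⟫_ℂ := by
    intro x y h g
    simp only [hL, stineL_tmul]
    rw [hQmove, hQQ]
    rw [show ⟪(π x) (V h), Q ((π y) (V g))⟫_ℂ = ⟪V h, (π (star x)) (Q ((π y) (V g)))⟫_ℂ by
      rw [← hπadj]; exact (ContinuousLinearMap.adjoint_inner_right _ _ _).symm]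
    rw [hQcomm]
    rw [show (π (star x)) ((π y) (V g)) = (π (star x * y)) (V g) by
      rw [map_mul]; rfl]
    rw [← ContinuousLinearMap.adjoint_inner_right V]
    rw [hT (star x * y)]
    rfl
  have keyB : ∀ (x y : X) (h g : H),
      ⟪L' (x ⊗ₜ[ℂ] h), L' (y ⊗ₜ[ℂ] g)⟫_ℂ = ⟪h, T (star x * y) g⟫_ℂ := by
    intro x y h g
    simp only [hL', stineL_tmul]
    rw [show ⟪(π' x) (V' h), (π' y) (V' g)⟫_ℂ = ⟪V' h, (π' (star x)) ((π' y) (V' g))⟫_ℂ by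
      rw [← (show adjoint (π' x) = π' (star x) from by
        rw [← ContinuousLinearMap.star_eq_adjoint, ← map_star])]
      exact (ContinuousLinearMap.adjoint_inner_right _ _ _).symm]
    rw [show (π' (star x)) ((π' y) (V' g)) = (π' (star x * y)) (V' g) by
      rw [map_mul]; rfl]
    rw [← ContinuousLinearMap.adjoint_inner_right V']
    rw [hst' (star x * y)]
    rfl
  have key : ∀ s t : TensorProduct ℂ X H, ⟪Q (L s), Q (L t)⟫_ℂ = ⟪L' s, L' t⟫_ℂ := by
    intro s t
    induction s using TensorProduct.induction_on with
    | zero => simp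
    | add a b ha hb => simp [map_add, inner_add_left, ha, hb]
    | tmul x h =>
      induction t using TensorProduct.induction_on with
      | zero => simp
      | add a b ha hb => simp [map_add, inner_add_right, ha, hb]
      | tmul y g => rw [keyA, keyB]
  have hnorm : ∀ t : TensorProduct ℂ X H, ‖Q (L t)‖ = ‖L' t‖ := by
    intro t
    rw [@norm_eq_sqrt_re_inner ℂ, @norm_eq_sqrt_re_inner ℂ, key t t]
  -- the densely-defined isometry
  have hker : LinearMap.ker L' ≤ LinearMap.ker (Q.toLinearMap ∘ₗ L) := by
    intro t ht
    rw [LinearMap.mem_ker] at ht ⊢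
    have h0 : ⟪Q (L t), Q (L t)⟫_ℂ = 0 := by rw [key t t, ht]; simp
    simpa [LinearMap.comp_apply] using inner_self_eq_zero.mp h0
  set g0 : (TensorProduct ℂ X H ⧸ LinearMap.ker L') →ₗ[ℂ] K :=
    (LinearMap.ker L').liftQ (Q.toLinearMap ∘ₗ L) hker with hg0
  set e' := LinearMap.quotKerEquivRange L' with he'
  set g : ↥(LinearMap.range L') →ₗ[ℂ] K := g0 ∘ₗ (e'.symm : _ →ₗ[ℂ] _) with hg
  have g_apply : ∀ (t : TensorProduct ℂ X H) (ht : L' t ∈ LinearMap.range L'),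
      g ⟨L' t, ht⟩ = Q (L t) := by
    intro t ht
    have h1 : e'.symm ⟨L' t, ht⟩ = Submodule.Quotient.mk t := by
      rw [LinearEquiv.symm_apply_eq]
      exact Subtype.ext (LinearMap.quotKerEquivRange_apply_mk L' t).symm
    simp only [hg, LinearMap.comp_apply, LinearEquiv.coe_coe, h1, hg0]
    simp [Submodule.liftQ_apply]
  have g_norm : ∀ d : ↥(LinearMap.range L'), ‖g d‖ = ‖d‖ := by
    rintro ⟨k, hk⟩
    obtain ⟨t, rfl⟩ := hk
    rw [g_apply t ⟨t, rfl⟩, hnorm]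
    rfl
  set gI : ↥(LinearMap.range L') →ₗᵢ[ℂ] K := ⟨g, g_norm⟩ with hgI
  -- density
  have hd' : Dense ((LinearMap.range L' : Submodule ℂ K') : Set K') := by
    rw [hL', range_stineL]
    exact Submodule.dense_iff_topologicalClosure_eq_top.mpr hmin'
  have hsubt : (⇑(LinearMap.range L').subtypeL : ↥(LinearMap.range L') → K') = Subtype.val := rfl
  have hdr : DenseRange ((LinearMap.range L').subtypeL) := by
    rw [DenseRange, hsubt, Subtype.range_coe]
    exact hd'
  have hui : IsUniformInducing ((LinearMap.range L').subtypeL) := by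
    rw [show (⇑(LinearMap.range L').subtypeL) = (Subtype.val : ↥(LinearMap.range L') → K')
      from rfl] at *
    exact isometry_subtype_coe.isUniformInducing
  set W : K' →L[ℂ] K :=
    ContinuousLinearMap.extend gI.toContinuousLinearMap ((LinearMap.range L').subtypeL)
    with hW
  have hWd : ∀ d : ↥(LinearMap.range L'), W (d : K') = g d := by
    intro d
    have := ContinuousLinearMap.extend_eq gI.toContinuousLinearMap
      (e := (LinearMap.range L').subtypeL) hdr hui d
    exact this
  have hWL : ∀ t : TensorProduct ℂ X H, W (L' t) = Q (L t) := by
    intro t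
    have := hWd ⟨L' t, ⟨t, rfl⟩⟩
    rw [this, g_apply t ⟨t, rfl⟩]
  have hWn : ∀ k : K', ‖W k‖ = ‖k‖ := by
    have heq : (fun k : K' => ‖W k‖) = fun k => ‖k‖ := by
      refine Continuous.ext_on hd' (W.continuous.norm) continuous_norm ?_
      rintro k ⟨t, rfl⟩
      simp only [hWL, hnorm]
    exact fun k => congrFun heq k
  have hIso : Isometry W := AddMonoidHomClass.isometry_of_norm W hWn
  have hC : ∀ (x : X) (k : K'), π x (W k) = W (π' x k) := by
    intro x
    have heq : (fun k : K' => π x (W k)) = fun k => W (π' x k) := by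
      refine Continuous.ext_on hd' ((π x).continuous.comp W.continuous)
        (W.continuous.comp (π' x).continuous) ?_
      rintro k ⟨t, rfl⟩
      have h1 : π x (W (L' t)) = Q (L (LinearMap.rTensor H (LinearMap.mulLeft ℂ x) t)) := by
        rw [hWL, hQcomm x (L t), hL, stineL_mul]
      have h2 : π' x (L' t) = L' (LinearMap.rTensor H (LinearMap.mulLeft ℂ x) t) := by
        rw [hL', stineL_mul]
      show (π x) (W (L' t)) = W ((π' x) (L' t))
      rw [h2, hWL, hWL, hQcomm, hL, stineL_mul]
    exact fun k => congrFun heq k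
  have hQW : ∀ k : K', Q (W k) = W k := by
    have heq : (fun k : K' => Q (W k)) = fun k => W k := by
      refine Continuous.ext_on hd' (Q.continuous.comp W.continuous) W.continuous ?_
      rintro k ⟨t, rfl⟩
      simp only [hWL, hQQ]
    exact fun k => congrFun heq k
  have hWV : ∀ h : H, W (V' h) = Q (V h) := by
    intro h
    have h1 : V' h = L' ((1 : X) ⊗ₜ[ℂ] h) := by
      simp [hL', stineL_tmul, map_one]
    rw [h1, hWL]
    simp [hL, stineL_tmul, map_one]
  have hrange : ∀ k : K, Q k ∈ Set.range W := by
    have hcl : IsClosed (Set.range W) := hIso.isClosedEmbedding.isClosed_range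
    have hdL : Dense ((LinearMap.range L : Submodule ℂ K) : Set K) := by
      rw [hL, range_stineL]
      exact Submodule.dense_iff_topologicalClosure_eq_top.mpr hmin
    intro k
    have h1 : k ∈ closure ((LinearMap.range L : Submodule ℂ K) : Set K) := hdL k
    have h2 : Q k ∈ closure (Q '' ((LinearMap.range L : Submodule ℂ K) : Set K)) :=
      image_closure_subset_closure_image Q.continuous ⟨k, h1, rfl⟩
    have h3 : Q '' ((LinearMap.range L : Submodule ℂ K) : Set K) ⊆ Set.range W := by
      rintro _ ⟨_, ⟨t, rfl⟩, rfl⟩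
      exact ⟨L' t, hWL t⟩
    exact closure_minimal h3 hcl h2
  exact ⟨W, hIso, hWV, hC, hQW, hrange⟩

/-- If `T = T₁ + T₂` and a projection `P ∈ π(X)′` implements `T₁` and `T₂` in a minimal
Stinespring representation `(π, K, V)` of `T`, then `(π, K, V)` is unitarily equivalent
to the direct sum of minimal Stinespring representations of `T₁` and `T₂`. -/
theorem minimal_stinespring_direct_sum
    {X : Type*} [NormedRing X] [StarRing X] [CStarRing X]
    [NormedAlgebra ℂ X] [StarModule ℂ X]
    {H K K₁ K₂ : Type*} [NormedAddCommGroup H] [InnerProductSpace ℂ H] [CompleteSpace H]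
    [NormedAddCommGroup K] [InnerProductSpace ℂ K] [CompleteSpace K]
    [NormedAddCommGroup K₁] [InnerProductSpace ℂ K₁] [CompleteSpace K₁]
    [NormedAddCommGroup K₂] [InnerProductSpace ℂ K₂] [CompleteSpace K₂]
    (T₁ T₂ : X →ₗ[ℂ] (H →L[ℂ] H))
    (hT₁ : CompletelyPositiveFun (⇑T₁)) (hT₂ : CompletelyPositiveFun (⇑T₂))
    (π : X →⋆ₐ[ℂ] (K →L[ℂ] K)) (V : H →L[ℂ] K)
    (hst : IsStinespring (fun x => T₁ x + T₂ x) π V) (hmin : IsMinimalStinespring π V)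
    (P : K →L[ℂ] K) (hproj : IsIdempotentElem P) (hsa : IsSelfAdjoint P)
    (hcomm : ∀ x : X, P * π x = π x * P)
    (h₁ : ∀ x : X, T₁ x = (ContinuousLinearMap.adjoint V).comp (P.comp ((π x).comp V)))
    (h₂ : ∀ x : X, T₂ x =
      (ContinuousLinearMap.adjoint V).comp ((1 - P).comp ((π x).comp V)))
    (π₁ : X →⋆ₐ[ℂ] (K₁ →L[ℂ] K₁)) (V₁ : H →L[ℂ] K₁)
    (hst₁ : IsStinespring (⇑T₁) π₁ V₁) (hmin₁ : IsMinimalStinespring π₁ V₁)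
    (π₂ : X →⋆ₐ[ℂ] (K₂ →L[ℂ] K₂)) (V₂ : H →L[ℂ] K₂)
    (hst₂ : IsStinespring (⇑T₂) π₂ V₂) (hmin₂ : IsMinimalStinespring π₂ V₂) :
    ∃ U : K ≃ₗᵢ[ℂ] WithLp 2 (K₁ × K₂),
      (∀ h : H, WithLp.equiv 2 (K₁ × K₂) (U (V h)) = (V₁ h, V₂ h)) ∧
      ∀ (x : X) (k : K),
        WithLp.equiv 2 (K₁ × K₂) (U (π x k)) =
          (π₁ x (WithLp.equiv 2 (K₁ × K₂) (U k)).1,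
           π₂ x (WithLp.equiv 2 (K₁ × K₂) (U k)).2) := by
  -- `1 - P` is also a commuting orthogonal projection
  have hproj' : IsIdempotentElem (1 - P) := hproj.one_sub
  have hsa' : IsSelfAdjoint (1 - P) := (IsSelfAdjoint.one (R := K →L[ℂ] K)).sub hsa
  have hcomm' : ∀ x : X, (1 - P) * π x = π x * (1 - P) := fun x => by
    rw [sub_mul, mul_sub, one_mul, mul_one, hcomm]
  obtain ⟨W₁, hI₁, hV₁, hC₁, hQ₁, hR₁⟩ :=
    stinespring_corner (⇑T₁) π V hmin P hproj hsa hcomm h₁ π₁ V₁ hst₁ hmin₁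
  obtain ⟨W₂, hI₂, hV₂, hC₂, hQ₂, hR₂⟩ :=
    stinespring_corner (⇑T₂) π V hmin (1 - P) hproj' hsa' hcomm' h₂ π₂ V₂ hst₂ hmin₂
  have hP10 : P * (1 - P) = 0 := by rw [mul_sub, mul_one, hproj, sub_self]
  -- orthogonality of the two ranges
  have horth : ∀ (a : K₁) (b : K₂), ⟪W₁ a, W₂ b⟫_ℂ = 0 := by
    intro a b
    have h1 : ⟪W₁ a, W₂ b⟫_ℂ = ⟪P (W₁ a), W₂ b⟫_ℂ := by rw [hQ₁]
    have h2 : ⟪P (W₁ a), W₂ b⟫_ℂ = ⟪W₁ a, P (W₂ b)⟫_ℂ := by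
      conv_lhs => rw [← hsa.adjoint_eq]
      rw [ContinuousLinearMap.adjoint_inner_left]
    have h3 : P (W₂ b) = 0 := by
      rw [← hQ₂ b]
      have := DFunLike.congr_fun hP10 (W₂ b)
      simpa [ContinuousLinearMap.mul_apply] using this
    rw [h1, h2, h3, inner_zero_right]
  -- the isometry Φ : K₁ ⊕₂ K₂ → K
  set eL := WithLp.linearEquiv 2 ℂ (K₁ × K₂) with heL
  set M : WithLp 2 (K₁ × K₂) →ₗ[ℂ] K :=
    ((W₁ : K₁ →ₗ[ℂ] K).comp (LinearMap.fst ℂ K₁ K₂) +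
      (W₂ : K₂ →ₗ[ℂ] K).comp (LinearMap.snd ℂ K₁ K₂)).comp (eL : _ →ₗ[ℂ] K₁ × K₂) with hM
  have hMapp : ∀ p : WithLp 2 (K₁ × K₂), M p = W₁ (eL p).1 + W₂ (eL p).2 := fun p => rfl
  have hW₁n : ∀ a : K₁, ‖W₁ a‖ = ‖a‖ := fun a => by
    simpa using hI₁.dist_eq a 0
  have hW₂n : ∀ b : K₂, ‖W₂ b‖ = ‖b‖ := fun b => by
    simpa using hI₂.dist_eq b 0
  have hMn : ∀ p : WithLp 2 (K₁ × K₂), ‖M p‖ = ‖p‖ := by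
    intro p
    have hsq : ‖M p‖ ^ 2 = ‖p‖ ^ 2 := by
      rw [hMapp, pow_two,
        norm_add_sq_eq_norm_sq_add_norm_sq_of_inner_eq_zero (𝕜 := ℂ) _ _ (horth _ _),
        hW₁n, hW₂n, WithLp.prod_norm_sq_eq_of_L2, pow_two, pow_two]
      rfl
    rw [← Real.sqrt_sq (norm_nonneg (M p)), ← Real.sqrt_sq (norm_nonneg p), hsq]
  set Φ : WithLp 2 (K₁ × K₂) →ₗᵢ[ℂ] K := ⟨M, hMn⟩ with hΦ
  have hΦapp : ∀ p : WithLp 2 (K₁ × K₂), Φ p = W₁ (eL p).1 + W₂ (eL p).2 := fun p => rfl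
  have hsurj : Function.Surjective Φ := by
    intro k
    obtain ⟨a, ha⟩ := hR₁ k
    obtain ⟨b, hb⟩ := hR₂ k
    refine ⟨(WithLp.equiv 2 (K₁ × K₂)).symm (a, b), ?_⟩
    have : Φ ((WithLp.equiv 2 (K₁ × K₂)).symm (a, b)) = W₁ a + W₂ b := rfl
    rw [this, ha, hb]
    simp [ContinuousLinearMap.sub_apply]
  set E := LinearIsometryEquiv.ofSurjective Φ hsurj with hE
  have hEapp : ∀ p, E p = Φ p := fun p => rfl
  refine ⟨E.symm, ?_, ?_⟩
  · intro h
    have hEq : E ((WithLp.equiv 2 (K₁ × K₂)).symm (V₁ h, V₂ h)) = V h := by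
      rw [hEapp]
      rw [show Φ ((WithLp.equiv 2 (K₁ × K₂)).symm (V₁ h, V₂ h)) = W₁ (V₁ h) + W₂ (V₂ h)
        from rfl]
      rw [hV₁, hV₂]
      simp [ContinuousLinearMap.sub_apply]
    have hU : E.symm (V h) = (WithLp.equiv 2 (K₁ × K₂)).symm (V₁ h, V₂ h) := by
      rw [← hEq, LinearIsometryEquiv.symm_apply_apply]
    rw [hU, Equiv.apply_symm_apply]
  · intro x k
    set p := E.symm k with hp
    have hk : k = W₁ (eL p).1 + W₂ (eL p).2 := by
      rw [← hΦapp, ← hEapp, hp, LinearIsometryEquiv.apply_symm_apply]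
    have hπk : π x k = Φ ((WithLp.equiv 2 (K₁ × K₂)).symm (π₁ x (eL p).1, π₂ x (eL p).2)) := by
      rw [hk, map_add, hC₁, hC₂]
      rfl
    have hU : E.symm (π x k) =
        (WithLp.equiv 2 (K₁ × K₂)).symm (π₁ x (eL p).1, π₂ x (eL p).2) := by
      rw [hπk, ← hEapp, LinearIsometryEquiv.symm_apply_apply]
    rw [hU, Equiv.apply_symm_apply]
    rfl
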